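/- For n ≥ 1 let Rₙ := 𝔽₂[x]/(xⁿ). The group homomorphism G(R_{n+1}) → G(Rₙ) on square classes induced by the canonical projection R_{n+1} → Rₙ is surjective, and its kernel is the subgroup of G(R_{n+1}) generated by the square class [1 + xⁿ] of the unit 1 + xⁿ. -/

import Mathlib

noncomputable section

def squareUnits (R : Type) [CommRing R] : Subgroup Rˣ :=
  (powMonoidHom 2 : Rˣ →* Rˣ).range

def SqCl (R : Type) [CommRing R] : Type := Rˣ ⧸ squareUnits R

instance (R : Type) [CommRing R] : CommGroup (SqCl R) :=
  QuotientGroup.Quotient.commGroup (squareUnits R)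

def cls {R : Type} [CommRing R] (a : Rˣ) : SqCl R := QuotientGroup.mk a

/-- The group homomorphism on square classes induced by a ring homomorphism. -/
def clsMap {R S : Type} [CommRing R] [CommRing S] (φ : R →+* S) : SqCl R →* SqCl S :=
  QuotientGroup.map (squareUnits R) (squareUnits S) (Units.map (φ : R →* S)) (by
    rintro x ⟨y, rfl⟩
    exact ⟨Units.map (φ : R →* S) y, by simp [powMonoidHom]⟩)

/-- The ring `𝔽₂[x]/(xⁿ)` of truncated polynomials. -/
abbrev Rtrunc (n : ℕ) : Type :=
  Polynomial (ZMod 2) ⧸ Ideal.span {(Polynomial.X : Polynomial (ZMod 2)) ^ n}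

/-- The class of `x` in `𝔽₂[x]/(xⁿ)`. -/
def xbar (n : ℕ) : Rtrunc n :=
  Ideal.Quotient.mk (Ideal.span {(Polynomial.X : Polynomial (ZMod 2)) ^ n}) Polynomial.X

/-- The canonical projection `𝔽₂[x]/(x^{n+1}) → 𝔽₂[x]/(xⁿ)`. -/
def truncMap (n : ℕ) : Rtrunc (n + 1) →+* Rtrunc n :=
  Ideal.Quotient.factor
    (Ideal.span_singleton_le_span_singleton.mpr (pow_dvd_pow Polynomial.X n.le_succ))

lemma xbar_pow_self (m : ℕ) : xbar m ^ m = 0 := by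
  rw [xbar, ← map_pow, Ideal.Quotient.eq_zero_iff_mem]
  exact Ideal.subset_span rfl

lemma two_eq_zero (m : ℕ) : (2 : Rtrunc m) = 0 := by
  have h2 : (2 : Polynomial (ZMod 2)) = 0 := CharTwo.two_eq_zero
  calc (2 : Rtrunc m) = Ideal.Quotient.mk _ (2 : Polynomial (ZMod 2)) := (map_ofNat _ 2).symm
    _ = 0 := by rw [h2, map_zero]

lemma two_mul_eq_zero (m : ℕ) (a : Rtrunc m) : a + a = 0 := by
  have h := two_eq_zero m
  calc a + a = 2 * a := by ring
    _ = 0 := by rw [h, zero_mul]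

lemma truncMap_mk (n : ℕ) (p : Polynomial (ZMod 2)) :
    truncMap n (Ideal.Quotient.mk _ p) = Ideal.Quotient.mk _ p :=
  Ideal.Quotient.factor_mk _ p

lemma truncMap_xbar (n : ℕ) : truncMap n (xbar (n+1)) = xbar n := truncMap_mk n _

lemma truncMap_surj (n : ℕ) : Function.Surjective (truncMap n) := by
  intro s
  obtain ⟨p, rfl⟩ := Ideal.Quotient.mk_surjective s
  exact ⟨Ideal.Quotient.mk _ p, truncMap_mk n p⟩

lemma ker_char (n : ℕ) (k : Rtrunc (n+1)) (hk : truncMap n k = 0) :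
    k = 0 ∨ k = xbar (n+1) ^ n := by
  obtain ⟨p, rfl⟩ := Ideal.Quotient.mk_surjective k
  rw [truncMap_mk, Ideal.Quotient.eq_zero_iff_mem, Ideal.mem_span_singleton] at hk
  obtain ⟨q, rfl⟩ := hk
  have hq : Polynomial.X ^ n * q
      = Polynomial.X ^ n * Polynomial.C (q.coeff 0) + Polynomial.X ^ (n+1) * q.divX := by
    conv_lhs => rw [← Polynomial.X_mul_divX_add q]
    ring
  rw [hq, map_add]
  have h1 : (Ideal.Quotient.mk (Ideal.span {(Polynomial.X : Polynomial (ZMod 2)) ^ (n+1)}))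
      (Polynomial.X ^ (n+1) * q.divX) = 0 := by
    rw [Ideal.Quotient.eq_zero_iff_mem]
    exact Ideal.mem_span_singleton.mpr ⟨q.divX, rfl⟩
  rw [h1, add_zero, map_mul]
  rcases (by decide : ∀ c : ZMod 2, c = 0 ∨ c = 1) (q.coeff 0) with hc | hc
  · left; rw [hc]; simp
  · right; rw [hc]; simp [xbar, map_pow]

lemma sq_ker_zero (n : ℕ) (hn : 1 ≤ n) (k : Rtrunc (n+1)) (hk : truncMap n k = 0) :
    k * k = 0 := by
  rcases ker_char n k hk with rfl | rfl
  · simp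
  · rw [← pow_add, show n + n = (n+1) + (n-1) by omega, pow_add, xbar_pow_self, zero_mul]

lemma one_add_ker_sq (n : ℕ) (hn : 1 ≤ n) (k : Rtrunc (n+1)) (hk : truncMap n k = 0) :
    (1 + k) * (1 + k) = 1 := by
  have h1 := sq_ker_zero n hn k hk
  have h2 := two_mul_eq_zero (n+1) k
  calc (1 + k) * (1 + k) = 1 + (k + k) + k * k := by ring
    _ = 1 := by rw [h1, h2, add_zero, add_zero]

lemma unit_lift (n : ℕ) (hn : 1 ≤ n) (v : (Rtrunc n)ˣ) :
    ∃ v' : (Rtrunc (n+1))ˣ,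
      Units.map ((truncMap n : Rtrunc (n+1) →+* Rtrunc n) : Rtrunc (n+1) →* Rtrunc n) v' = v := by
  obtain ⟨a, ha⟩ := truncMap_surj n (v : Rtrunc n)
  obtain ⟨b, hb⟩ := truncMap_surj n (↑v⁻¹ : Rtrunc n)
  set k := a * b - 1 with hkdef
  have hk0 : truncMap n k = 0 := by
    rw [hkdef, map_sub, map_mul, ha, hb, map_one]
    simp
  have hinv : a * (b * (1 + k)) = 1 := by
    have hab : a * b = 1 + k := by rw [hkdef]; ring
    calc a * (b * (1 + k)) = (a * b) * (1 + k) := by ring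
      _ = (1 + k) * (1 + k) := by rw [hab]
      _ = 1 := one_add_ker_sq n hn k hk0
  refine ⟨⟨a, b * (1 + k), hinv, by rw [mul_comm]; exact hinv⟩, Units.ext ?_⟩
  simpa using ha

/-- For `n ≥ 1`, the induced map on square classes
`G(𝔽₂[x]/(x^{n+1})) → G(𝔽₂[x]/(xⁿ))` is surjective with kernel generated by the square class
of the unit `1 + xⁿ`. -/
theorem sqcl_trunc_exact (n : ℕ) (hn : 1 ≤ n) :
    ∃ u : (Rtrunc (n + 1))ˣ,
      (u : Rtrunc (n + 1)) = 1 + xbar (n + 1) ^ n ∧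
      Function.Surjective (clsMap (truncMap n)) ∧
      (clsMap (truncMap n)).ker = Subgroup.closure {cls u} := by
  haveI h1n : (squareUnits (Rtrunc n)).Normal :=
    ⟨fun a ha g => by rwa [mul_comm g a, mul_assoc, mul_inv_cancel, mul_one]⟩
  haveI h2n : (squareUnits (Rtrunc (n+1))).Normal :=
    ⟨fun a ha g => by rwa [mul_comm g a, mul_assoc, mul_inv_cancel, mul_one]⟩
  have hxk : truncMap n (xbar (n+1) ^ n) = 0 := by
    rw [map_pow, truncMap_xbar, xbar_pow_self]
  have hu2 : (1 + xbar (n+1) ^ n) * (1 + xbar (n+1) ^ n) = 1 :=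
    one_add_ker_sq n hn _ hxk
  refine ⟨⟨1 + xbar (n+1) ^ n, 1 + xbar (n+1) ^ n, hu2, hu2⟩, rfl, ?_, ?_⟩
  · -- surjectivity
    intro y
    obtain ⟨v, rfl⟩ := QuotientGroup.mk_surjective y
    obtain ⟨v', hv'⟩ := unit_lift n hn v
    exact ⟨cls v', congrArg cls hv'⟩
  · set u : (Rtrunc (n+1))ˣ := ⟨1 + xbar (n+1) ^ n, 1 + xbar (n+1) ^ n, hu2, hu2⟩ with hudef
    apply le_antisymm
    · intro g hg
      obtain ⟨w, rfl⟩ := QuotientGroup.mk_surjective g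
      change (clsMap (truncMap n)) (cls w) = 1 at hg
      replace hg : cls (Units.map ((truncMap n : Rtrunc (n+1) →+* Rtrunc n) :
          Rtrunc (n+1) →* Rtrunc n) w) = 1 := hg
      obtain ⟨t, ht⟩ := (QuotientGroup.eq_one_iff _).mp hg
      rw [powMonoidHom_apply] at ht
      obtain ⟨t', ht'⟩ := unit_lift n hn t
      set π := Units.map ((truncMap n : Rtrunc (n+1) →+* Rtrunc n) : Rtrunc (n+1) →* Rtrunc n)
      have hπw' : π (w * (t' ^ 2)⁻¹) = 1 := by
        rw [map_mul, map_inv, map_pow, ht', ht]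
        exact mul_inv_cancel _
      have hval : truncMap n (((w * (t' ^ 2)⁻¹ : (Rtrunc (n+1))ˣ) : Rtrunc (n+1)) - 1) = 0 := by
        have := congrArg Units.val hπw'
        rw [map_sub, map_one]
        rw [show truncMap n ((w * (t' ^ 2)⁻¹ : (Rtrunc (n+1))ˣ) : Rtrunc (n+1))
            = ((π (w * (t' ^ 2)⁻¹) : (Rtrunc n)ˣ) : Rtrunc n) from rfl, hπw']
        simp
      have hsq : cls (t' ^ 2) = (1 : SqCl (Rtrunc (n+1))) :=
        (QuotientGroup.eq_one_iff _).mpr ⟨t', rfl⟩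
      rcases ker_char n _ hval with h | h
      · have hw' : w * (t' ^ 2)⁻¹ = 1 := Units.ext (by
          rw [sub_eq_zero] at h; simpa using h)
        have hw : w = t' ^ 2 := by
          rwa [mul_inv_eq_one] at hw'
        show QuotientGroup.mk w ∈ _
        rw [hw]
        rw [show (QuotientGroup.mk (t' ^ 2) : SqCl (Rtrunc (n+1))) = cls (t' ^ 2) from rfl, hsq]
        exact one_mem _
      · have hw' : w * (t' ^ 2)⁻¹ = u := Units.ext (by
          rw [sub_eq_iff_eq_add] at h
          rw [h, hudef]
          simp [add_comm])
        have hw : w = u * t' ^ 2 := by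
          rw [← hw']; group
        show QuotientGroup.mk w ∈ _
        rw [hw, show (QuotientGroup.mk (u * t' ^ 2) : SqCl (Rtrunc (n+1)))
            = cls u * cls (t' ^ 2) from rfl, hsq]
        show cls u * 1 ∈ Subgroup.closure {cls u}
        rw [mul_one]
        exact Subgroup.subset_closure rfl
    · rw [Subgroup.closure_le]
      rintro g hg
      rcases hg with rfl
      have hπu : Units.map ((truncMap n : Rtrunc (n+1) →+* Rtrunc n) : Rtrunc (n+1) →* Rtrunc n) u
          = 1 := Units.ext (by
        show truncMap n ((u : (Rtrunc (n+1))ˣ) : Rtrunc (n+1)) = 1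
        rw [hudef]
        show truncMap n (1 + xbar (n+1) ^ n) = 1
        rw [map_add, map_one, hxk, add_zero])
      show cls u ∈ (clsMap (truncMap n)).ker
      rw [MonoidHom.mem_ker]
      show cls (Units.map ((truncMap n : Rtrunc (n+1) →+* Rtrunc n) :
          Rtrunc (n+1) →* Rtrunc n) u) = 1
      rw [hπu]
      rfl

end
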